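/- For positive definite matrices A and B and t in [0,1], (A #_t B)^{-1} = A^{-1} #_t B^{-1}. -/

import Mathlib

open Matrix
open scoped ComplexOrder

/-- Real power of a Hermitian matrix via its spectral decomposition
(junk value for non-Hermitian input). -/
noncomputable def mrpow {m : ℕ} (A : Matrix (Fin m) (Fin m) ℂ) (t : ℝ) : Matrix (Fin m) (Fin m) ℂ :=
  if h : A.IsHermitian then
    (h.eigenvectorUnitary : Matrix (Fin m) (Fin m) ℂ) *
      Matrix.diagonal (fun i => ((h.eigenvalues i ^ t : ℝ) : ℂ)) *
      star (h.eigenvectorUnitary : Matrix (Fin m) (Fin m) ℂ)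
  else A

/-- Weighted geometric mean  A #_t B = A^{1/2} (A^{-1/2} B A^{-1/2})^t A^{1/2}. -/
noncomputable def geomMean {m : ℕ} (t : ℝ) (A B : Matrix (Fin m) (Fin m) ℂ) :
    Matrix (Fin m) (Fin m) ℂ :=
  mrpow A (1/2) * mrpow (mrpow A (-(1/2)) * B * mrpow A (-(1/2))) t * mrpow A (1/2)

section Aux

variable {m : ℕ}

private lemma unitary_conj_diag_congr (U V : Matrix.unitaryGroup (Fin m) ℂ)
    (d e : Fin m → ℝ) (f : ℝ → ℝ)
    (h : (U : Matrix (Fin m) (Fin m) ℂ) * diagonal (fun i => (d i : ℂ)) *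
        star (U : Matrix (Fin m) (Fin m) ℂ) =
      (V : Matrix (Fin m) (Fin m) ℂ) * diagonal (fun i => (e i : ℂ)) *
        star (V : Matrix (Fin m) (Fin m) ℂ)) :
    (U : Matrix (Fin m) (Fin m) ℂ) * diagonal (fun i => (f (d i) : ℂ)) *
        star (U : Matrix (Fin m) (Fin m) ℂ) =
      (V : Matrix (Fin m) (Fin m) ℂ) * diagonal (fun i => (f (e i) : ℂ)) *
        star (V : Matrix (Fin m) (Fin m) ℂ) := by
  set Uc := (U : Matrix (Fin m) (Fin m) ℂ) with hUc
  set Vc := (V : Matrix (Fin m) (Fin m) ℂ) with hVc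
  have hU1 : star Uc * Uc = 1 := mem_unitaryGroup_iff'.mp U.2
  have hU2 : Uc * star Uc = 1 := mem_unitaryGroup_iff.mp U.2
  have hV1 : star Vc * Vc = 1 := mem_unitaryGroup_iff'.mp V.2
  have hV2 : Vc * star Vc = 1 := mem_unitaryGroup_iff.mp V.2
  set W := star Vc * Uc with hW
  have hWD : W * diagonal (fun i => (d i : ℂ)) = diagonal (fun i => (e i : ℂ)) * W := by
    have h' := congrArg (fun X => star Vc * X * Uc) h
    simp only [hW] at h' ⊢
    calc star Vc * Uc * diagonal (fun i => (d i : ℂ))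
        = star Vc * Uc * diagonal (fun i => (d i : ℂ)) * (star Uc * Uc) := by
          rw [hU1, mul_one]
      _ = star Vc * (Uc * diagonal (fun i => (d i : ℂ)) * star Uc) * Uc := by
          noncomm_ring
      _ = star Vc * (Vc * diagonal (fun i => (e i : ℂ)) * star Vc) * Uc := by rw [h]
      _ = (star Vc * Vc) * diagonal (fun i => (e i : ℂ)) * (star Vc * Uc) := by
          noncomm_ring
      _ = diagonal (fun i => (e i : ℂ)) * (star Vc * Uc) := by rw [hV1, one_mul]
  have key : ∀ i j, W i j ≠ 0 → d j = e i := by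
    intro i j hne
    have h1 : W i j * (d j : ℂ) = (e i : ℂ) * W i j := by
      have := congrFun (congrFun hWD i) j
      simpa [Matrix.mul_diagonal, Matrix.diagonal_mul] using this
    rw [mul_comm ((e i : ℂ))] at h1
    have h2 : ((d j : ℂ)) = (e i : ℂ) := mul_left_cancel₀ hne h1
    exact_mod_cast h2
  have hWf : W * diagonal (fun i => (f (d i) : ℂ)) = diagonal (fun i => (f (e i) : ℂ)) * W := by
    ext i j
    simp only [Matrix.mul_diagonal, Matrix.diagonal_mul]
    rcases eq_or_ne (W i j) 0 with h0 | h0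
    · simp [h0]
    · rw [key i j h0, mul_comm]
  have hUVW : Uc = Vc * W := by
    rw [hW, ← mul_assoc, hV2, one_mul]
  have hWst : W * star W = 1 := by
    rw [hW, Matrix.star_mul, star_star, mul_assoc, ← mul_assoc Uc, hU2, one_mul, hV1]
  rw [hUVW, Matrix.star_mul]
  calc Vc * W * diagonal (fun i => (f (d i) : ℂ)) * (star W * star Vc)
      = Vc * (W * diagonal (fun i => (f (d i) : ℂ)) * star W) * star Vc := by noncomm_ring
    _ = Vc * (diagonal (fun i => (f (e i) : ℂ)) * (W * star W)) * star Vc := by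
        rw [hWf]; noncomm_ring
    _ = Vc * diagonal (fun i => (f (e i) : ℂ)) * star Vc := by
        rw [hWst, mul_one]

/-- `mrpow` can be computed from any unitary diagonalization. -/
private lemma mrpow_eq_of_spectral {A : Matrix (Fin m) (Fin m) ℂ} (hA : A.IsHermitian)
    (V : Matrix.unitaryGroup (Fin m) ℂ) (e : Fin m → ℝ)
    (h : A = (V : Matrix (Fin m) (Fin m) ℂ) * diagonal (fun i => (e i : ℂ)) *
        star (V : Matrix (Fin m) (Fin m) ℂ)) (t : ℝ) :
    mrpow A t = (V : Matrix (Fin m) (Fin m) ℂ) * diagonal (fun i => ((e i ^ t : ℝ) : ℂ)) *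
        star (V : Matrix (Fin m) (Fin m) ℂ) := by
  rw [mrpow, dif_pos hA]
  refine unitary_conj_diag_congr hA.eigenvectorUnitary V hA.eigenvalues e (fun x => x ^ t) ?_
  rw [← h]
  have := hA.spectral_theorem
  rw [Unitary.conjStarAlgAut_apply] at this
  exact this.symm

private lemma mrpow_spectral {A : Matrix (Fin m) (Fin m) ℂ} (hA : A.IsHermitian) (t : ℝ) :
    mrpow A t = (hA.eigenvectorUnitary : Matrix (Fin m) (Fin m) ℂ) *
      diagonal (fun i => ((hA.eigenvalues i ^ t : ℝ) : ℂ)) *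
      star (hA.eigenvectorUnitary : Matrix (Fin m) (Fin m) ℂ) := by
  rw [mrpow, dif_pos hA]

private lemma conj_diag_mul (V : Matrix.unitaryGroup (Fin m) ℂ) (d e : Fin m → ℂ) :
    ((V : Matrix (Fin m) (Fin m) ℂ) * diagonal d * star (V : Matrix (Fin m) (Fin m) ℂ)) *
      ((V : Matrix (Fin m) (Fin m) ℂ) * diagonal e * star (V : Matrix (Fin m) (Fin m) ℂ)) =
    (V : Matrix (Fin m) (Fin m) ℂ) * diagonal (fun i => d i * e i) *
      star (V : Matrix (Fin m) (Fin m) ℂ) := by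
  have hV1 : star (V : Matrix (Fin m) (Fin m) ℂ) * V = 1 := mem_unitaryGroup_iff'.mp V.2
  calc ((V : Matrix (Fin m) (Fin m) ℂ) * diagonal d * star (V : Matrix (Fin m) (Fin m) ℂ)) *
      ((V : Matrix (Fin m) (Fin m) ℂ) * diagonal e * star (V : Matrix (Fin m) (Fin m) ℂ))
      = (V : Matrix (Fin m) (Fin m) ℂ) * diagonal d *
        (star (V : Matrix (Fin m) (Fin m) ℂ) * V) * diagonal e *
        star (V : Matrix (Fin m) (Fin m) ℂ) := by noncomm_ring
    _ = (V : Matrix (Fin m) (Fin m) ℂ) * (diagonal d * diagonal e) *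
        star (V : Matrix (Fin m) (Fin m) ℂ) := by rw [hV1, mul_one]; noncomm_ring
    _ = _ := by rw [diagonal_mul_diagonal]

private lemma dot_conj (N M : Matrix (Fin m) (Fin m) ℂ) (x : Fin m → ℂ) :
    star x ⬝ᵥ (N * M * star N) *ᵥ x = star (star N *ᵥ x) ⬝ᵥ M *ᵥ (star N *ᵥ x) := by
  have hs : star (star N *ᵥ x) = star x ᵥ* N := by
    rw [Matrix.star_mulVec, Matrix.star_eq_conjTranspose, conjTranspose_conjTranspose]
  rw [← Matrix.mulVec_mulVec, ← Matrix.mulVec_mulVec, Matrix.dotProduct_mulVec, ← hs]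

/-- mrpow of a positive definite matrix is positive definite. -/
private lemma mrpow_posDef {A : Matrix (Fin m) (Fin m) ℂ} (hA : A.PosDef) (t : ℝ) :
    (mrpow A t).PosDef := by
  rw [mrpow_spectral hA.1 t]
  set Vc := (hA.1.eigenvectorUnitary : Matrix (Fin m) (Fin m) ℂ) with hVc
  have hV1 : star Vc * Vc = 1 := mem_unitaryGroup_iff'.mp hA.1.eigenvectorUnitary.2
  have hV2 : Vc * star Vc = 1 := mem_unitaryGroup_iff.mp hA.1.eigenvectorUnitary.2
  have hD : (diagonal (fun i => ((hA.1.eigenvalues i ^ t : ℝ) : ℂ))).PosDef := by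
    refine Matrix.PosDef.diagonal fun i => ?_
    rw [RCLike.lt_iff_re_im]
    constructor
    · simpa using Real.rpow_pos_of_pos (hA.eigenvalues_pos i) t
    · simp
  refine Matrix.PosDef.of_dotProduct_mulVec_pos ?_ ?_
  · have := isHermitian_mul_mul_conjTranspose Vc hD.1
    simpa [Matrix.star_eq_conjTranspose] using this
  · intro x hx
    have hxV : star Vc *ᵥ x ≠ 0 := by
      have hinj : Function.Injective (star Vc).mulVec := by
        refine mulVec_injective_iff_isUnit.mpr (isUnit_iff_exists.mpr ⟨Vc, hV1, hV2⟩)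
      intro hcon
      exact hx (hinj (by simpa using hcon))
    have hpos := hD.dotProduct_mulVec_pos hxV
    rw [dot_conj]
    exact hpos

/-- Conjugation of a posdef matrix by a posdef (hence Hermitian invertible) matrix. -/
private lemma posDef_conj {M N : Matrix (Fin m) (Fin m) ℂ} (hM : M.PosDef) (hN : N.PosDef) :
    (N * M * N).PosDef := by
  have hNH : star N = N := by rw [Matrix.star_eq_conjTranspose]; exact hN.1
  refine Matrix.PosDef.of_dotProduct_mulVec_pos ?_ ?_
  · have := isHermitian_mul_mul_conjTranspose N hM.1
    rwa [hN.1.eq] at this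
  · intro x hx
    have hNx : N *ᵥ x ≠ 0 := by
      have hinj : Function.Injective N.mulVec := mulVec_injective_iff_isUnit.mpr hN.isUnit
      intro hcon
      exact hx (hinj (by simpa using hcon))
    have key := dot_conj N M x
    rw [hNH] at key
    rw [key]
    exact hM.dotProduct_mulVec_pos hNx

/-- Inverse of a real power. -/
private lemma mrpow_inv {A : Matrix (Fin m) (Fin m) ℂ} (hA : A.PosDef) (t : ℝ) :
    (mrpow A t)⁻¹ = mrpow A (-t) := by
  apply Matrix.inv_eq_right_inv
  rw [mrpow_spectral hA.1 t, mrpow_spectral hA.1 (-t), conj_diag_mul]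
  have : (fun i => ((hA.1.eigenvalues i ^ t : ℝ) : ℂ) * ((hA.1.eigenvalues i ^ (-t) : ℝ) : ℂ))
      = fun _ => (1 : ℂ) := by
    funext i
    rw [← Complex.ofReal_mul, ← Real.rpow_add (hA.eigenvalues_pos i)]
    simp
  rw [this, diagonal_one, mul_one]
  exact mem_unitaryGroup_iff.mp hA.1.eigenvectorUnitary.2

/-- Real power of the inverse. -/
private lemma mrpow_of_inv {A : Matrix (Fin m) (Fin m) ℂ} (hA : A.PosDef) (t : ℝ) :
    mrpow A⁻¹ t = mrpow A (-t) := by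
  have hAinv : A⁻¹ = (hA.1.eigenvectorUnitary : Matrix (Fin m) (Fin m) ℂ) *
      diagonal (fun i => (((hA.1.eigenvalues i)⁻¹ : ℝ) : ℂ)) *
      star (hA.1.eigenvectorUnitary : Matrix (Fin m) (Fin m) ℂ) := by
    apply Matrix.inv_eq_right_inv
    nth_rw 1 [hA.1.spectral_theorem]
    have : (diagonal (RCLike.ofReal ∘ hA.1.eigenvalues) : Matrix (Fin m) (Fin m) ℂ)
        = diagonal (fun i => ((hA.1.eigenvalues i : ℝ) : ℂ)) := rfl
    rw [Unitary.conjStarAlgAut_apply, this, conj_diag_mul]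
    have : (fun i => ((hA.1.eigenvalues i : ℝ) : ℂ) * (((hA.1.eigenvalues i)⁻¹ : ℝ) : ℂ))
        = fun _ => (1 : ℂ) := by
      funext i
      rw [← Complex.ofReal_mul, mul_inv_cancel₀ (hA.eigenvalues_pos i).ne']
      simp
    rw [this, diagonal_one, mul_one]
    exact mem_unitaryGroup_iff.mp hA.1.eigenvectorUnitary.2
  rw [mrpow_eq_of_spectral hA.inv.1 hA.1.eigenvectorUnitary _ hAinv t,
    mrpow_spectral hA.1 (-t)]
  have : (fun i => (((hA.1.eigenvalues i)⁻¹ ^ t : ℝ) : ℂ))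
      = fun i => ((hA.1.eigenvalues i ^ (-t) : ℝ) : ℂ) := by
    funext i
    rw [Real.inv_rpow (hA.eigenvalues_pos i).le, ← Real.rpow_neg (hA.eigenvalues_pos i).le]
  rw [this]

end Aux

theorem geomMean_inv {m : ℕ} (A B : Matrix (Fin m) (Fin m) ℂ)
    (hA : A.PosDef) (hB : B.PosDef) (t : ℝ) (ht : t ∈ Set.Icc (0:ℝ) 1) :
    (geomMean t A B)⁻¹ = geomMean t A⁻¹ B⁻¹ := by
  have hNpd : (mrpow A (-(1/2))).PosDef := mrpow_posDef hA _
  have hC : (mrpow A (-(1/2)) * B * mrpow A (-(1/2))).PosDef := posDef_conj hB hNpd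
  have hNinv : (mrpow A (-(1/2)))⁻¹ = mrpow A (1/2) := by rw [mrpow_inv hA, neg_neg]
  have hCinv : (mrpow A (-(1/2)) * B * mrpow A (-(1/2)))⁻¹
      = mrpow A (1/2) * B⁻¹ * mrpow A (1/2) := by
    rw [Matrix.mul_inv_rev, Matrix.mul_inv_rev, ← mul_assoc, hNinv]
  rw [geomMean, geomMean, mrpow_of_inv hA, mrpow_of_inv hA, neg_neg, ← hCinv,
    mrpow_of_inv hC, Matrix.mul_inv_rev, Matrix.mul_inv_rev, mrpow_inv hA,
    mrpow_inv hC, ← mul_assoc]
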